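/- Let A ∈ ℝ^{n×n} and let B ∈ ℝ^{n×q} have full column rank q. If the matrix −(A+A^T) is positive definite on the kernel of B^T (that is, x^T (A+A^T) x < 0 for every nonzero x ∈ ℝ^n with B^T x = 0), then the symmetric matrix M := [[−(A+A^T), B],[B^T, 0]] ∈ ℝ^{(n+q)×(n+q)} has exactly n positive eigenvalues and exactly q negative eigenvalues. -/

import Mathlib

open Matrix

section Aux

private lemma sp_quad_bound {n : ℕ} (H : Matrix (Fin n) (Fin n) ℝ) :
    ∃ C > 0, ∀ w : Fin n → ℝ, w ⬝ᵥ (H *ᵥ w) ≤ C * (w ⬝ᵥ w) := by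
  refine ⟨(∑ i, ∑ j, |H i j|) + 1, by positivity, fun w => ?_⟩
  have hS : ∀ i, w i * w i ≤ w ⬝ᵥ w := fun i =>
    Finset.single_le_sum (f := fun k => w k * w k) (fun k _ => mul_self_nonneg _)
      (Finset.mem_univ i)
  have hS0 : 0 ≤ w ⬝ᵥ w := Finset.sum_nonneg fun k _ => mul_self_nonneg _
  have key : ∀ i j, w i * (H i j * w j) ≤ |H i j| * (w ⬝ᵥ w) := by
    intro i j
    have h1 : |w i * w j| ≤ w ⬝ᵥ w := by
      have := hS i; have := hS j
      have habs : |w i * w j| = |w i| * |w j| := abs_mul _ _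
      nlinarith [sq_nonneg (|w i| - |w j|), sq_abs (w i), sq_abs (w j)]
    calc w i * (H i j * w j) = H i j * (w i * w j) := by ring
      _ ≤ |H i j * (w i * w j)| := le_abs_self _
      _ = |H i j| * |w i * w j| := abs_mul _ _
      _ ≤ |H i j| * (w ⬝ᵥ w) := mul_le_mul_of_nonneg_left h1 (abs_nonneg _)
  calc w ⬝ᵥ (H *ᵥ w) = ∑ i, ∑ j, w i * (H i j * w j) := by
        simp [dotProduct, mulVec, Finset.mul_sum]
    _ ≤ ∑ i, ∑ j, |H i j| * (w ⬝ᵥ w) :=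
        Finset.sum_le_sum fun i _ => Finset.sum_le_sum fun j _ => key i j
    _ = (∑ i, ∑ j, |H i j|) * (w ⬝ᵥ w) := by simp [Finset.sum_mul]
    _ ≤ ((∑ i, ∑ j, |H i j|) + 1) * (w ⬝ᵥ w) := by nlinarith

private lemma sp_exists_c {n q : ℕ} (H : Matrix (Fin n) (Fin n) ℝ) (B : Matrix (Fin n) (Fin q) ℝ)
    (h : ∀ x : Fin n → ℝ, x ≠ 0 → Bᵀ *ᵥ x = 0 → 0 < x ⬝ᵥ (H *ᵥ x)) :
    ∃ c > 0, ∀ x : Fin n → ℝ, x ≠ 0 →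
      0 < x ⬝ᵥ (H *ᵥ x) + c * ((Bᵀ *ᵥ x) ⬝ᵥ (Bᵀ *ᵥ x)) := by
  set g : (Fin n → ℝ) → ℝ := fun x => x ⬝ᵥ (H *ᵥ x) with hg
  set f : (Fin n → ℝ) → ℝ := fun x => (Bᵀ *ᵥ x) ⬝ᵥ (Bᵀ *ᵥ x) with hf
  have cg : Continuous g := by simp only [hg, dotProduct, mulVec]; fun_prop
  have cf : Continuous f := by simp only [hf, dotProduct, mulVec]; fun_prop
  have hf0 : ∀ x, 0 ≤ f x := fun x => Finset.sum_nonneg fun k _ => mul_self_nonneg _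
  have hgh : ∀ (a : ℝ) (x), g (a • x) = a * (a * g x) := by
    intro a x
    simp [hg, mulVec_smul, smul_dotProduct, dotProduct_smul, mul_assoc]
  have hfh : ∀ (a : ℝ) (x), f (a • x) = a * (a * f x) := by
    intro a x
    simp [hf, mulVec_smul, smul_dotProduct, dotProduct_smul, mul_assoc]
  set K := Metric.sphere (0 : Fin n → ℝ) 1 with hK
  have hKc : IsCompact K := isCompact_sphere _ _
  set S := K ∩ {x | g x ≤ 0} with hSdef
  have hSc : IsCompact S := hKc.inter_right (isClosed_le cg continuous_const)
  have main : ∃ c > 0, ∀ u ∈ K, 0 < g u + c * f u := by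
    rcases S.eq_empty_or_nonempty with hS | hS
    · refine ⟨1, one_pos, fun u hu => ?_⟩
      have hnot : u ∉ S := by rw [hS]; exact Set.notMem_empty u
      have hgu : ¬ g u ≤ 0 := fun hgu => hnot ⟨hu, hgu⟩
      nlinarith [hf0 u]
    · obtain ⟨x₀, hx₀S, hx₀min⟩ := hSc.exists_isMinOn hS cg.continuousOn
      obtain ⟨x₁, hx₁S, hx₁min⟩ := hSc.exists_isMinOn hS cf.continuousOn
      have hm : 0 < f x₁ := by
        rcases lt_or_eq_of_le (hf0 x₁) with hlt | heq
        · exact hlt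
        · exfalso
          have hx₁K : x₁ ∈ K := hx₁S.1
          have hx₁ne : x₁ ≠ 0 := by
            intro h0
            have := mem_sphere_zero_iff_norm.mp hx₁K
            simp [h0] at this
          have hB0 : Bᵀ *ᵥ x₁ = 0 := (dotProduct_self_eq_zero).mp heq.symm
          exact absurd hx₁S.2 (not_le.mpr (h x₁ hx₁ne hB0))
      have h3 : g x₀ ≤ 0 := hx₀S.2
      have hcpos : 0 < (1 - g x₀) / f x₁ := div_pos (by linarith) hm
      refine ⟨(1 - g x₀) / f x₁, hcpos, fun u hu => ?_⟩
      by_cases hgu : g u ≤ 0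
      · have huS : u ∈ S := ⟨hu, hgu⟩
        have h1 : g x₀ ≤ g u := hx₀min huS
        have h2 : f x₁ ≤ f u := hx₁min huS
        have hcm : (1 - g x₀) / f x₁ * f x₁ ≤ (1 - g x₀) / f x₁ * f u :=
          mul_le_mul_of_nonneg_left h2 (le_of_lt hcpos)
        rw [div_mul_cancel₀ _ (ne_of_gt hm)] at hcm
        nlinarith
      · push_neg at hgu
        nlinarith [mul_nonneg (le_of_lt hcpos) (hf0 u)]
  obtain ⟨c, hc, hcK⟩ := main
  refine ⟨c, hc, fun x hx => ?_⟩
  have hxn : (0:ℝ) < ‖x‖ := norm_pos_iff.mpr hx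
  set u := ‖x‖⁻¹ • x with hu
  have huK : u ∈ K := by
    rw [hK, mem_sphere_zero_iff_norm, hu, norm_smul]
    simp [abs_of_pos (inv_pos.mpr hxn), inv_mul_cancel₀ (ne_of_gt hxn)]
  have hx_eq : x = ‖x‖ • u := by
    rw [hu, smul_smul, mul_inv_cancel₀ (ne_of_gt hxn), one_smul]
  have hpos := hcK u huK
  have e1 : g x = ‖x‖ * (‖x‖ * g u) := by
    conv_lhs => rw [hx_eq]
    exact hgh _ _
  have e2 : f x = ‖x‖ * (‖x‖ * f u) := by
    conv_lhs => rw [hx_eq]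
    exact hfh _ _
  show 0 < g x + c * f x
  rw [e1, e2]
  nlinarith [mul_pos hxn (mul_pos hxn hpos)]

private lemma sp_quadform_eigen {ι : Type*} [Fintype ι] [DecidableEq ι]
    (M : Matrix ι ι ℝ) (hM : M.IsHermitian) (v : ι → ℝ) :
    v ⬝ᵥ (M *ᵥ v) = ∑ i, hM.eigenvalues i *
      ((star (hM.eigenvectorUnitary : Matrix ι ι ℝ) *ᵥ v) i)^2 := by
  conv_lhs => rw [hM.spectral_theorem, Unitary.conjStarAlgAut_apply]
  set U := (hM.eigenvectorUnitary : Matrix ι ι ℝ) with hU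
  rw [← mulVec_mulVec, ← mulVec_mulVec, dotProduct_mulVec]
  have hstar : star U = Uᵀ := by
    rw [Matrix.star_eq_conjTranspose, conjTranspose_eq_transpose_of_trivial]
  rw [← mulVec_transpose, ← hstar]
  simp only [dotProduct, mulVec_diagonal, Function.comp, RCLike.ofReal_real_eq_id, id]
  exact Finset.sum_congr rfl fun i _ => by ring

private lemma sp_card_pos_ge {ι : Type*} [Fintype ι] [DecidableEq ι]
    (M : Matrix ι ι ℝ) (hM : M.IsHermitian) {d : ℕ}
    (T : (Fin d → ℝ) →ₗ[ℝ] (ι → ℝ))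
    (hpos : ∀ x, x ≠ 0 → 0 < (T x) ⬝ᵥ (M *ᵥ (T x))) :
    d ≤ Fintype.card {i : ι // 0 < hM.eigenvalues i} := by
  by_contra hlt
  push_neg at hlt
  set U := (hM.eigenvectorUnitary : Matrix ι ι ℝ) with hU
  set ψ : (Fin d → ℝ) →ₗ[ℝ] ({i : ι // 0 < hM.eigenvalues i} → ℝ) :=
    (LinearMap.funLeft ℝ ℝ (Subtype.val)).comp ((Matrix.mulVecLin (star U)).comp T) with hψ
  have hninj : ¬ Function.Injective ψ := by
    intro hinj
    have := LinearMap.finrank_le_finrank_of_injective hinj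
    rw [Module.finrank_pi, Module.finrank_pi] at this
    simp only [Fintype.card_fin] at this
    omega
  rw [Function.not_injective_iff] at hninj
  obtain ⟨a, b, hab, hne⟩ := hninj
  set x := a - b with hx
  have hx0 : x ≠ 0 := sub_ne_zero.mpr hne
  have hψx : ψ x = 0 := by rw [hx, map_sub, hab, sub_self]
  have hcoord : ∀ i : ι, 0 < hM.eigenvalues i → (star U *ᵥ (T x)) i = 0 := by
    intro i hi
    have := congrFun hψx ⟨i, hi⟩
    simpa [hψ, LinearMap.funLeft] using this
  have hq := hpos x hx0
  rw [sp_quadform_eigen M hM (T x)] at hq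
  have : ∑ i, hM.eigenvalues i * ((star U *ᵥ (T x)) i)^2 ≤ 0 := by
    refine Finset.sum_nonpos fun i _ => ?_
    rcases lt_or_ge 0 (hM.eigenvalues i) with hpos' | hle
    · rw [hcoord i hpos']; simp
    · exact mul_nonpos_of_nonpos_of_nonneg hle (sq_nonneg _)
  linarith

private lemma sp_card_neg_ge {ι : Type*} [Fintype ι] [DecidableEq ι]
    (M : Matrix ι ι ℝ) (hM : M.IsHermitian) {d : ℕ}
    (T : (Fin d → ℝ) →ₗ[ℝ] (ι → ℝ))
    (hneg : ∀ x, x ≠ 0 → (T x) ⬝ᵥ (M *ᵥ (T x)) < 0) :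
    d ≤ Fintype.card {i : ι // hM.eigenvalues i < 0} := by
  by_contra hlt
  push_neg at hlt
  set U := (hM.eigenvectorUnitary : Matrix ι ι ℝ) with hU
  set ψ : (Fin d → ℝ) →ₗ[ℝ] ({i : ι // hM.eigenvalues i < 0} → ℝ) :=
    (LinearMap.funLeft ℝ ℝ (Subtype.val)).comp ((Matrix.mulVecLin (star U)).comp T) with hψ
  have hninj : ¬ Function.Injective ψ := by
    intro hinj
    have := LinearMap.finrank_le_finrank_of_injective hinj
    rw [Module.finrank_pi, Module.finrank_pi] at this
    simp only [Fintype.card_fin] at this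
    omega
  rw [Function.not_injective_iff] at hninj
  obtain ⟨a, b, hab, hne⟩ := hninj
  set x := a - b with hx
  have hx0 : x ≠ 0 := sub_ne_zero.mpr hne
  have hψx : ψ x = 0 := by rw [hx, map_sub, hab, sub_self]
  have hcoord : ∀ i : ι, hM.eigenvalues i < 0 → (star U *ᵥ (T x)) i = 0 := by
    intro i hi
    have := congrFun hψx ⟨i, hi⟩
    simpa [hψ, LinearMap.funLeft] using this
  have hq := hneg x hx0
  rw [sp_quadform_eigen M hM (T x)] at hq
  have : 0 ≤ ∑ i, hM.eigenvalues i * ((star U *ᵥ (T x)) i)^2 := by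
    refine Finset.sum_nonneg fun i _ => ?_
    rcases lt_or_ge (hM.eigenvalues i) 0 with hneg' | hle
    · rw [hcoord i hneg']; simp
    · exact mul_nonneg hle (sq_nonneg _)
  linarith

end Aux

/-- Proposition of Chipman–Chipman type: if `−(A+Aᵀ)` is positive
definite on the kernel of `Bᵀ` and `B` has full column rank `q`, then the saddle-point
matrix `M = [[−(A+Aᵀ), B],[Bᵀ, 0]]` has exactly `n` positive and `q` negative eigenvalues. -/
theorem saddle_point_eigenvalue_count {n q : ℕ}
    (A : Matrix (Fin n) (Fin n) ℝ) (B : Matrix (Fin n) (Fin q) ℝ)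
    (hB : B.rank = q)
    (hker : ∀ x : Fin n → ℝ, x ≠ 0 → Bᵀ *ᵥ x = 0 → x ⬝ᵥ ((A + Aᵀ) *ᵥ x) < 0)
    (M : Matrix (Fin n ⊕ Fin q) (Fin n ⊕ Fin q) ℝ)
    (hM : M = Matrix.fromBlocks (-(A + Aᵀ)) B Bᵀ 0)
    (hHerm : M.IsHermitian) :
    Nat.card {i : Fin n ⊕ Fin q // 0 < hHerm.eigenvalues i} = n ∧
      Nat.card {i : Fin n ⊕ Fin q // hHerm.eigenvalues i < 0} = q := by
  set H := -(A + Aᵀ) with hH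
  -- positivity on the kernel, in terms of H
  have hker' : ∀ x : Fin n → ℝ, x ≠ 0 → Bᵀ *ᵥ x = 0 → 0 < x ⬝ᵥ (H *ᵥ x) := by
    intro x hx hBx
    have := hker x hx hBx
    rw [hH, neg_mulVec, dotProduct_neg]
    linarith
  -- B has trivial kernel
  have Binj : ∀ y : Fin q → ℝ, B *ᵥ y = 0 → y = 0 := by
    unfold Matrix.rank at hB
    have h2 := LinearMap.finrank_range_add_finrank_ker (B.mulVecLin)
    rw [hB, Module.finrank_pi] at h2
    simp only [Fintype.card_fin] at h2
    have hker0 : Module.finrank ℝ (LinearMap.ker B.mulVecLin) = 0 := by omega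
    have hbot : LinearMap.ker B.mulVecLin = ⊥ := Submodule.finrank_eq_zero.mp hker0
    intro y hy
    have hmem : y ∈ LinearMap.ker B.mulVecLin := by
      rw [LinearMap.mem_ker, mulVecLin_apply]; exact hy
    rwa [hbot, Submodule.mem_bot] at hmem
  -- the quadratic form of M on Sum.elim vectors
  have hform : ∀ (x : Fin n → ℝ) (y : Fin q → ℝ),
      Sum.elim x y ⬝ᵥ (M *ᵥ Sum.elim x y)
        = x ⬝ᵥ (H *ᵥ x) + 2 * (x ⬝ᵥ (B *ᵥ y)) := by
    intro x y
    rw [hM, fromBlocks_mulVec, sumElim_dotProduct_sumElim]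
    simp only [Sum.elim_comp_inl, Sum.elim_comp_inr]
    rw [dotProduct_add, dotProduct_add, zero_mulVec, dotProduct_zero]
    have h1 : y ⬝ᵥ (Bᵀ *ᵥ x) = x ⬝ᵥ (B *ᵥ y) := by
      rw [dotProduct_comm, dotProduct_mulVec, ← mulVec_transpose, dotProduct_comm,
        dotProduct_mulVec, ← mulVec_transpose, transpose_transpose]
    rw [h1]; ring
  obtain ⟨c, hc, hcineq⟩ := sp_exists_c H B hker'
  obtain ⟨C, hC, hCineq⟩ := sp_quad_bound H
  -- positive-definite subspace of dimension n
  set T₁ : (Fin n → ℝ) →ₗ[ℝ] (Fin n ⊕ Fin q → ℝ) :=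
    { toFun := fun x => Sum.elim x ((c/2) • (Bᵀ *ᵥ x))
      map_add' := by
        intro x y; funext i
        cases i <;> (simp [mulVec_add, smul_add]; try ring)
      map_smul' := by
        intro a x; funext i
        cases i <;> (simp [mulVec_smul, smul_comm a]; try ring) } with hT₁
  have hT₁pos : ∀ x, x ≠ 0 → 0 < (T₁ x) ⬝ᵥ (M *ᵥ (T₁ x)) := by
    intro x hx
    have heq : (T₁ x) ⬝ᵥ (M *ᵥ (T₁ x))
        = x ⬝ᵥ (H *ᵥ x) + c * ((Bᵀ *ᵥ x) ⬝ᵥ (Bᵀ *ᵥ x)) := by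
      show Sum.elim x ((c/2) • (Bᵀ *ᵥ x)) ⬝ᵥ (M *ᵥ Sum.elim x ((c/2) • (Bᵀ *ᵥ x)))
        = _
      rw [hform]
      have : x ⬝ᵥ (B *ᵥ ((c/2) • (Bᵀ *ᵥ x))) = (c/2) * ((Bᵀ *ᵥ x) ⬝ᵥ (Bᵀ *ᵥ x)) := by
        rw [mulVec_smul, dotProduct_smul, smul_eq_mul, dotProduct_mulVec, ← mulVec_transpose]
      rw [this]; ring
    rw [heq]
    exact hcineq x hx
  -- negative-definite subspace of dimension q
  set t := C⁻¹ with ht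
  have htpos : 0 < t := inv_pos.mpr hC
  set T₂ : (Fin q → ℝ) →ₗ[ℝ] (Fin n ⊕ Fin q → ℝ) :=
    { toFun := fun y => Sum.elim (-(t • (B *ᵥ y))) y
      map_add' := by
        intro x y; funext i
        cases i <;> (simp [mulVec_add, smul_add]; try ring)
      map_smul' := by
        intro a x; funext i
        cases i <;> (simp [mulVec_smul, smul_comm a]; try ring) } with hT₂
  have hT₂neg : ∀ y, y ≠ 0 → (T₂ y) ⬝ᵥ (M *ᵥ (T₂ y)) < 0 := by
    intro y hy
    set w := B *ᵥ y with hw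
    have hwne : w ≠ 0 := fun h0 => hy (Binj y h0)
    have hww : 0 < w ⬝ᵥ w := by
      rcases lt_or_eq_of_le (Finset.sum_nonneg fun k _ => mul_self_nonneg (w k)) with hlt | heq
      · exact hlt
      · exact absurd ((dotProduct_self_eq_zero).mp heq.symm) hwne
    have heq : (T₂ y) ⬝ᵥ (M *ᵥ (T₂ y))
        = t * (t * (w ⬝ᵥ (H *ᵥ w))) - 2 * (t * (w ⬝ᵥ w)) := by
      show Sum.elim (-(t • w)) y ⬝ᵥ (M *ᵥ Sum.elim (-(t • w)) y) = _
      rw [hform]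
      have e1 : (-(t • w)) ⬝ᵥ (H *ᵥ (-(t • w))) = t * (t * (w ⬝ᵥ (H *ᵥ w))) := by
        rw [mulVec_neg, dotProduct_neg, neg_dotProduct, neg_neg, mulVec_smul,
          dotProduct_smul, smul_dotProduct, smul_eq_mul, smul_eq_mul]
      have e2 : (-(t • w)) ⬝ᵥ (B *ᵥ y) = -(t * (w ⬝ᵥ w)) := by
        rw [← hw, neg_dotProduct, smul_dotProduct, smul_eq_mul]
      rw [e1, e2]; ring
    rw [heq]
    have hb := hCineq w
    have h4 : t * (t * (C * (w ⬝ᵥ w))) = t * (w ⬝ᵥ w) := by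
      rw [ht]; field_simp
    have h1 : t * (t * (w ⬝ᵥ (H *ᵥ w))) ≤ t * (w ⬝ᵥ w) := by
      nlinarith [mul_nonneg (le_of_lt (mul_pos htpos htpos)) (sub_nonneg.mpr hb)]
    nlinarith [mul_pos htpos hww]
  -- counting
  have hP : n ≤ Fintype.card {i : Fin n ⊕ Fin q // 0 < hHerm.eigenvalues i} :=
    sp_card_pos_ge M hHerm T₁ hT₁pos
  have hN : q ≤ Fintype.card {i : Fin n ⊕ Fin q // hHerm.eigenvalues i < 0} :=
    sp_card_neg_ge M hHerm T₂ hT₂neg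
  have hsum : Fintype.card {i : Fin n ⊕ Fin q // 0 < hHerm.eigenvalues i}
      + Fintype.card {i : Fin n ⊕ Fin q // hHerm.eigenvalues i < 0} ≤ n + q := by
    classical
    rw [Fintype.card_subtype, Fintype.card_subtype]
    have hd : Disjoint (Finset.univ.filter fun i => 0 < hHerm.eigenvalues i)
        (Finset.univ.filter fun i => hHerm.eigenvalues i < 0) := by
      rw [Finset.disjoint_left]
      intro i hi1 hi2
      simp only [Finset.mem_filter] at hi1 hi2
      linarith [hi1.2, hi2.2]
    calc (Finset.univ.filter fun i => 0 < hHerm.eigenvalues i).card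
          + (Finset.univ.filter fun i => hHerm.eigenvalues i < 0).card
        = ((Finset.univ.filter fun i => 0 < hHerm.eigenvalues i)
            ∪ (Finset.univ.filter fun i => hHerm.eigenvalues i < 0)).card :=
          (Finset.card_union_of_disjoint hd).symm
      _ ≤ (Finset.univ : Finset (Fin n ⊕ Fin q)).card := Finset.card_le_card (Finset.subset_univ _)
      _ = n + q := by simp
  constructor <;> rw [Nat.card_eq_fintype_card] <;> omega
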